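/- arXiv:1507.08592 — 4 statements merged into one kernel-verified Lean document; each statement's English description precedes it below -/
import Mathlib

section
/- Let M and Q' be n×n real matrices. Assume that the function t ↦ exp(tMᵀ)·Q'·exp(tM) is Bochner integrable on [0,∞) and that exp(tM) → 0 (the zero matrix) as t → ∞. Then the matrix X = ∫₀^∞ exp(tMᵀ)·Q'·exp(tM) dt satisfies the Lyapunov equation MᵀX + XM + Q' = 0. -/
open MeasureTheory Matrix
open scoped NNReal

attribute [local instance] Matrix.linftyOpNormedAddCommGroup Matrix.linftyOpNormedSpace
  Matrix.linftyOpNormedRing Matrix.linftyOpNormedAlgebra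

noncomputable def auxContinuousENorm (n : ℕ) : ContinuousENorm (Matrix (Fin n) (Fin n) ℝ) :=
  SeminormedAddGroup.toContinuousENorm

def auxPseudoMetrizable (n : ℕ) :
    TopologicalSpace.PseudoMetrizableSpace (Matrix (Fin n) (Fin n) ℝ) :=
  inferInstanceAs (TopologicalSpace.PseudoMetrizableSpace (Fin n → Fin n → ℝ))

attribute [local instance] auxContinuousENorm auxPseudoMetrizable

lemma aux_norm_le {n : ℕ} (A : Matrix (Fin n) (Fin n) ℝ) :
    ‖A‖ ≤ ∑ i, ∑ j, ‖A i j‖ := by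
  have h : ‖A‖₊ ≤ ∑ i, ∑ j, ‖A i j‖₊ := by
    rw [Matrix.linfty_opNNNorm_def]
    exact Finset.sup_le fun i _ => Finset.single_le_sum
      (f := fun i => ∑ j, ‖A i j‖₊) (fun _ _ => zero_le) (Finset.mem_univ i)
  calc ‖A‖ = ((‖A‖₊ : ℝ≥0) : ℝ) := rfl
    _ ≤ ((∑ i, ∑ j, ‖A i j‖₊ : ℝ≥0) : ℝ) := by exact_mod_cast h
    _ = ∑ i, ∑ j, ‖A i j‖ := by push_cast; rfl

/-- If `t ↦ exp(tMᵀ) Q' exp(tM)` is integrable on `[0,∞)` (entrywise,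
equivalently Bochner) and `exp(tM) → 0` as `t → ∞`, then
`X = ∫₀^∞ exp(tMᵀ) Q' exp(tM) dt` satisfies the Lyapunov equation `MᵀX + XM + Q' = 0`. -/
theorem stmt2 (n : ℕ) (M Q' : Matrix (Fin n) (Fin n) ℝ)
    (hInt : ∀ i j, IntegrableOn
      (fun t : ℝ => (NormedSpace.exp (t • Mᵀ) * Q' * NormedSpace.exp (t • M)) i j)
      (Set.Ioi 0))
    (hlim : Filter.Tendsto (fun t : ℝ => NormedSpace.exp (t • M)) Filter.atTop
      (nhds (0 : Matrix (Fin n) (Fin n) ℝ)))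
    (X : Matrix (Fin n) (Fin n) ℝ)
    (hX : ∀ i j, X i j = ∫ t in Set.Ioi (0 : ℝ),
      (NormedSpace.exp (t • Mᵀ) * Q' * NormedSpace.exp (t • M)) i j) :
    Mᵀ * X + X * M + Q' = 0 := by
  set f : ℝ → Matrix (Fin n) (Fin n) ℝ :=
    fun t => NormedSpace.exp (t • Mᵀ) * Q' * NormedSpace.exp (t • M) with hf_def
  -- continuity of f
  have hcont : Continuous f := by
    have h1 : Continuous fun t : ℝ => NormedSpace.exp (t • Mᵀ) :=
      NormedSpace.exp_continuous.comp (continuous_id.smul continuous_const)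
    have h2 : Continuous fun t : ℝ => NormedSpace.exp (t • M) :=
      NormedSpace.exp_continuous.comp (continuous_id.smul continuous_const)
    exact (h1.mul continuous_const).mul h2
  -- Bochner integrability of f on Ioi 0
  have hfInt : IntegrableOn f (Set.Ioi 0) := by
    refine Integrable.mono' (g := fun t => ∑ i, ∑ j, ‖f t i j‖) ?_
      (hcont.aestronglyMeasurable.restrict) ?_
    · exact integrable_finset_sum _ fun i _ => integrable_finset_sum _ fun j _ => (hInt i j).norm
    · exact Filter.Eventually.of_forall fun t => aux_norm_le (f t)
  -- derivative of f
  have hderiv : ∀ t : ℝ, HasDerivAt f (Mᵀ * f t + f t * M) t := by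
    intro t
    have h1 : HasDerivAt (fun u : ℝ => NormedSpace.exp (u • Mᵀ))
        (Mᵀ * NormedSpace.exp (t • Mᵀ)) t := hasDerivAt_exp_smul_const' Mᵀ t
    have h2 : HasDerivAt (fun u : ℝ => NormedSpace.exp (u • M))
        (NormedSpace.exp (t • M) * M) t := hasDerivAt_exp_smul_const M t
    have := (h1.mul_const Q').mul h2
    refine this.congr_deriv ?_
    simp only [hf_def]
    noncomm_ring
  -- limit of f at infinity
  have hlimT : Filter.Tendsto (fun t : ℝ => NormedSpace.exp (t • Mᵀ))
      Filter.atTop (nhds 0) := by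
    have : (fun t : ℝ => NormedSpace.exp (t • Mᵀ)) =
        fun t : ℝ => (NormedSpace.exp (t • M))ᵀ := by
      funext t
      rw [← Matrix.transpose_smul, Matrix.exp_transpose]
    rw [this]
    have : Continuous (Matrix.transpose : Matrix (Fin n) (Fin n) ℝ → _) :=
      LinearMap.continuous_of_finiteDimensional
        (Matrix.transposeLinearEquiv (Fin n) (Fin n) ℝ ℝ).toLinearMap
    have h0 := (this.tendsto (0 : Matrix (Fin n) (Fin n) ℝ)).comp hlim
    simpa [Function.comp_def] using h0
  have hflim : Filter.Tendsto f Filter.atTop (nhds 0) := by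
    have := (hlimT.mul (tendsto_const_nhds (x := Q'))).mul hlim
    simpa using this
  -- integrability of the derivative
  have hf'Int : IntegrableOn (fun t => Mᵀ * f t + f t * M) (Set.Ioi 0) := by
    exact (hfInt.const_mul Mᵀ).add (hfInt.mul_const M)
  -- FTC
  have key : ∫ t in Set.Ioi (0 : ℝ), (Mᵀ * f t + f t * M) = 0 - f 0 :=
    integral_Ioi_of_hasDerivAt_of_tendsto (hcont.continuousWithinAt)
      (fun t _ => hderiv t) hf'Int hflim
  have hf0 : f 0 = Q' := by simp [hf_def, NormedSpace.exp_zero]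
  -- X is the Bochner integral of f
  have hXint : X = ∫ t in Set.Ioi (0 : ℝ), f t := by
    ext i j
    rw [hX i j]
    have := (LinearMap.toContinuousLinearMap
      (Matrix.entryLinearMap ℝ ℝ i j)).integral_comp_comm hfInt
    exact this
  -- split the integral
  have hsplit : ∫ t in Set.Ioi (0 : ℝ), (Mᵀ * f t + f t * M)
      = Mᵀ * X + X * M := by
    rw [integral_add (hfInt.const_mul Mᵀ) (hfInt.mul_const M)]
    have hL := (ContinuousLinearMap.mul ℝ (Matrix (Fin n) (Fin n) ℝ) Mᵀ).integral_comp_comm hfInt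
    have hR := ((ContinuousLinearMap.mul ℝ (Matrix (Fin n) (Fin n) ℝ)).flip M).integral_comp_comm hfInt
    simp only [ContinuousLinearMap.mul_apply', ContinuousLinearMap.flip_apply] at hL hR
    rw [hL, hR, hXint]
  rw [hsplit, hf0] at key
  rw [key]
  simp
end

section
/- (Core of Proposition 2.) Let n ≥ 1, δ > 0, ε ≥ 0, let Y be a symmetric n×n real matrix and P, P̄ arbitrary n×n real matrices. Define M = (1+δ)·PᵀP and N = (1+δ)·(PᵀP̄ + P̄ᵀ(P − P̄)). If Y − M is positive semidefinite and ‖Y − N‖ ≤ ε/n (ℓ2 operator norm), then trace(Y − M) ≤ ε. -/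
open Matrix
open scoped Matrix.Norms.L2Operator

lemma diag_abs_le_l2_opNorm {n : ℕ} (A : Matrix (Fin n) (Fin n) ℝ) (i : Fin n) :
    |A i i| ≤ ‖A‖ := by
  have h := A.l2_opNorm_mulVec (EuclideanSpace.single i (1 : ℝ))
  rw [EuclideanSpace.norm_single, norm_one, mul_one] at h
  refine le_trans ?_ h
  have hx : ((EuclideanSpace.equiv (Fin n) ℝ).symm (A.mulVec (EuclideanSpace.single i (1 : ℝ))) : EuclideanSpace ℝ (Fin n)) i = A i i := by
    simp [Matrix.mulVec, dotProduct, EuclideanSpace.single_apply]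
  calc |A i i| = ‖((EuclideanSpace.equiv (Fin n) ℝ).symm (A.mulVec (EuclideanSpace.single i (1 : ℝ))) : EuclideanSpace ℝ (Fin n)) i‖ := by
        rw [hx]; exact (Real.norm_eq_abs _).symm
    _ ≤ _ := by
        set v : EuclideanSpace ℝ (Fin n) := (EuclideanSpace.equiv (Fin n) ℝ).symm (A.mulVec (EuclideanSpace.single i (1 : ℝ)))
        rw [EuclideanSpace.norm_eq, Real.norm_eq_abs]
        have : |v i| = Real.sqrt (‖v i‖ ^ 2) := by
          rw [Real.norm_eq_abs, Real.sqrt_sq_eq_abs, abs_abs]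
        rw [this]
        apply Real.sqrt_le_sqrt
        exact Finset.single_le_sum (fun j _ => sq_nonneg ‖v j‖) (Finset.mem_univ i)

/-- core of Proposition 2: With `M = (1+δ) PᵀP` and the affine
approximation `N = (1+δ)(Pᵀ P̄ + P̄ᵀ(P - P̄))`, if `Y - M` is positive semidefinite
and `‖Y - N‖ ≤ ε/n` (ℓ2 operator norm), then `trace(Y - M) ≤ ε`. -/
theorem stmt10 (n : ℕ) (hn : 1 ≤ n) (δ ε : ℝ) (hδ : 0 < δ) (hε : 0 ≤ ε)
    (Y P Pbar M N : Matrix (Fin n) (Fin n) ℝ) (hY : Yᵀ = Y)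
    (hM : M = (1 + δ) • (Pᵀ * P))
    (hN : N = (1 + δ) • (Pᵀ * Pbar + Pbarᵀ * (P - Pbar)))
    (h1 : (Y - M).PosSemidef)
    (h2 : ‖Y - N‖ ≤ ε / n) :
    Matrix.trace (Y - M) ≤ ε := by
  have hMN : M - N = (1 + δ) • ((P - Pbar)ᵀ * (P - Pbar)) := by
    subst hM hN
    rw [← smul_sub]
    congr 1
    simp only [Matrix.transpose_sub, Matrix.sub_mul, Matrix.mul_sub]
    noncomm_ring
  have htr : 0 ≤ Matrix.trace (M - N) := by
    rw [hMN, Matrix.trace_smul]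
    have h0 : 0 ≤ Matrix.trace ((P - Pbar)ᵀ * (P - Pbar)) := by
      rw [Matrix.trace]
      refine Finset.sum_nonneg fun i _ => ?_
      simp only [Matrix.diag_apply, Matrix.mul_apply, Matrix.transpose_apply]
      exact Finset.sum_nonneg fun j _ => mul_self_nonneg _
    have : (0:ℝ) < 1 + δ := by linarith
    positivity
  have hsplit : Matrix.trace (Y - M) ≤ Matrix.trace (Y - N) := by
    have : Matrix.trace (Y - N) = Matrix.trace (Y - M) + Matrix.trace (M - N) := by
      rw [← Matrix.trace_add]; congr 1; abel
    linarith
  have hdiag : Matrix.trace (Y - N) ≤ ε := by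
    rw [Matrix.trace]
    have hbound : ∀ i : Fin n, (Y - N).diag i ≤ ε / n := fun i =>
      le_trans (le_abs_self _) (le_trans (diag_abs_le_l2_opNorm _ i) h2)
    calc ∑ i, (Y - N).diag i ≤ ∑ _i : Fin n, ε / n :=
          Finset.sum_le_sum fun i _ => hbound i
      _ = n * (ε / n) := by simp [Finset.sum_const, mul_comm]
      _ = ε := by
          field_simp
  linarith
end

section
/- (Proposition 2, feasible-set inclusion F₆ ⊆ F₁ in SDP form.) Let n ≥ 1, δ > 0, ε ≥ 0, let Y be a symmetric n×n real matrix and P, P̄ arbitrary n×n real matrices. Define M = (1+δ)·PᵀP and N = (1+δ)·(PᵀP̄ + P̄ᵀ(P − P̄)). If the block matrix [[Y, Pᵀ],[P, (1+δ)⁻¹·I]] is positive semidefinite and the block matrix [[(ε/n)·I, Y − N],[Y − N, (ε/n)·I]] is positive semidefinite, then Y − M is positive semidefinite and trace(Y − M) ≤ ε. -/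
open Matrix

/-- Proposition 2, feasible-set inclusion F₆ ⊆ F₁ in SDP form:
with `M = (1+δ) PᵀP` and `N = (1+δ)(Pᵀ P̄ + P̄ᵀ(P - P̄))`, if the block matrices
`[[Y, Pᵀ], [P, (1+δ)⁻¹ I]]` and `[[(ε/n) I, Y - N], [Y - N, (ε/n) I]]` are positive
semidefinite, then `Y - M` is positive semidefinite and `trace(Y - M) ≤ ε`. -/
theorem stmt11 (n : ℕ) (hn : 1 ≤ n) (δ ε : ℝ) (hδ : 0 < δ) (hε : 0 ≤ ε)
    (Y P Pbar M N : Matrix (Fin n) (Fin n) ℝ) (hY : Yᵀ = Y)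
    (hM : M = (1 + δ) • (Pᵀ * P))
    (hN : N = (1 + δ) • (Pᵀ * Pbar + Pbarᵀ * (P - Pbar)))
    (h1 : (Matrix.fromBlocks Y Pᵀ P
      ((1 + δ)⁻¹ • (1 : Matrix (Fin n) (Fin n) ℝ))).PosSemidef)
    (h2 : (Matrix.fromBlocks ((ε / n) • (1 : Matrix (Fin n) (Fin n) ℝ)) (Y - N)
      (Y - N) ((ε / n) • (1 : Matrix (Fin n) (Fin n) ℝ))).PosSemidef) :
    (Y - M).PosSemidef ∧ Matrix.trace (Y - M) ≤ ε := by
  have hδ' : (1:ℝ) + δ ≠ 0 := by positivity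
  -- Hermitian part
  have hherm : (Y - M).IsHermitian := by
    rw [Matrix.IsHermitian, conjTranspose_eq_transpose_of_trivial, transpose_sub, hY, hM,
      transpose_smul, transpose_mul, transpose_transpose]
  -- quadratic form part
  have hquad : ∀ x : Fin n → ℝ, 0 ≤ x ⬝ᵥ ((Y - M) *ᵥ x) := by
    intro x
    have h10 := h1.dotProduct_mulVec_nonneg (Sum.elim x (-((1+δ) • (P *ᵥ x))))
    simp only [star_trivial, fromBlocks_mulVec, Sum.elim_comp_inl, Sum.elim_comp_inr,
      sumElim_dotProduct_sumElim, mulVec_neg, mulVec_smul, smul_mulVec, one_mulVec,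
      dotProduct_add, dotProduct_neg, neg_dotProduct, dotProduct_smul, smul_dotProduct,
      smul_eq_mul, smul_neg, neg_neg] at h10
    have hP : x ⬝ᵥ (Pᵀ *ᵥ (P *ᵥ x)) = (P *ᵥ x) ⬝ᵥ (P *ᵥ x) := by
      rw [dotProduct_mulVec, vecMul_transpose]
    rw [hP] at h10
    field_simp at h10
    have : x ⬝ᵥ ((Y - M) *ᵥ x)
        = x ⬝ᵥ (Y *ᵥ x) - (1+δ) * ((P *ᵥ x) ⬝ᵥ (P *ᵥ x)) := by
      rw [hM, sub_mulVec, dotProduct_sub, smul_mulVec, dotProduct_smul, smul_eq_mul,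
        ← Matrix.mulVec_mulVec, hP]
    rw [this]
    nlinarith [h10]
  refine ⟨.of_dotProduct_mulVec_nonneg hherm (fun x => by simpa using hquad x), ?_⟩
  -- trace bound
  have hdiag : ∀ i : Fin n, (Y - N) i i ≤ ε / n := by
    intro i
    have h20 := h2.dotProduct_mulVec_nonneg (Sum.elim (Pi.single i (1:ℝ)) (-(Pi.single i (1:ℝ))))
    simp only [star_trivial, fromBlocks_mulVec, Sum.elim_comp_inl, Sum.elim_comp_inr,
      sumElim_dotProduct_sumElim, mulVec_neg, smul_mulVec, one_mulVec,
      dotProduct_add, dotProduct_neg, neg_dotProduct, dotProduct_smul,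
      smul_eq_mul, neg_neg, mulVec_single, single_dotProduct, dotProduct_single,
      one_mul, mul_one, Pi.single_eq_same, Matrix.smul_apply, Matrix.one_apply_eq] at h20
    simp only [MulOpposite.op_one, one_smul, Matrix.col_apply, Pi.neg_apply, Matrix.smul_apply,
      Matrix.one_apply_eq, smul_eq_mul, mul_one] at h20
    linarith
  have htrYN : Matrix.trace (Y - N) ≤ ε := by
    rw [Matrix.trace]
    calc ∑ i, (Y - N).diag i ≤ ∑ _i : Fin n, (ε / n) :=
          Finset.sum_le_sum fun i _ => hdiag i
      _ = n * (ε / n) := by simp [mul_comm]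
      _ = ε := by
          field_simp
  have hMN : M - N = (1+δ) • ((P - Pbar)ᵀ * (P - Pbar)) := by
    rw [hM, hN, ← smul_sub]
    congr 1
    rw [transpose_sub, sub_mul, mul_sub, mul_sub]
    abel
  have htrMN : 0 ≤ Matrix.trace (M - N) := by
    rw [hMN, Matrix.trace_smul, smul_eq_mul]
    have h0 : 0 ≤ Matrix.trace ((P - Pbar)ᵀ * (P - Pbar)) := by
      rw [Matrix.trace]
      refine Finset.sum_nonneg fun i _ => ?_
      simp only [Matrix.diag_apply, Matrix.mul_apply, Matrix.transpose_apply]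
      exact Finset.sum_nonneg fun j _ => mul_self_nonneg _
    positivity
  have : Matrix.trace (Y - M) = Matrix.trace (Y - N) - Matrix.trace (M - N) := by
    rw [← Matrix.trace_sub]
    congr 1
    abel
  linarith
end

section
/- (Proposition 1, feasible-set inclusion F₂ ⊆ F₁.) Let δ > 0, let Y be a symmetric n×n real matrix and P an n×n real matrix. If the block matrix [[Y, Pᵀ],[P, (1+δ)⁻¹·I]] is positive semidefinite and (1+δ)·PᵀP − Y is positive semidefinite, then Y = (1+δ)·PᵀP; consequently, for every ε ≥ 0 one has ‖Y − (1+δ)·PᵀP‖ ≤ ε for any norm ‖·‖ on n×n matrices. -/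
open Matrix

/-- Proposition 1, feasible-set inclusion F₂ ⊆ F₁: if the block matrix
`[[Y, Pᵀ], [P, (1+δ)⁻¹ I]]` is positive semidefinite and `(1+δ) PᵀP - Y` is positive
semidefinite, then `Y = (1+δ) PᵀP`; consequently, for any (semi)norm on `n×n`
matrices and every `ε ≥ 0`, `‖Y - (1+δ) PᵀP‖ ≤ ε`. -/
theorem stmt12 (n : ℕ) (δ : ℝ) (hδ : 0 < δ)
    (Y P : Matrix (Fin n) (Fin n) ℝ) (hY : Yᵀ = Y)
    (h1 : (Matrix.fromBlocks Y Pᵀ P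
      ((1 + δ)⁻¹ • (1 : Matrix (Fin n) (Fin n) ℝ))).PosSemidef)
    (h2 : ((1 + δ) • (Pᵀ * P) - Y).PosSemidef) :
    Y = (1 + δ) • (Pᵀ * P) ∧
      ∀ (nrm : Seminorm ℝ (Matrix (Fin n) (Fin n) ℝ)) (ε : ℝ), 0 ≤ ε →
        nrm (Y - (1 + δ) • (Pᵀ * P)) ≤ ε := by
  have hδ1 : (0:ℝ) < 1 + δ := by linarith
  set D : Matrix (Fin n) (Fin n) ℝ := (1 + δ)⁻¹ • (1 : Matrix (Fin n) (Fin n) ℝ) with hD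
  have hDpos : D.PosDef := by
    refine Matrix.posDef_iff_dotProduct_mulVec.mpr ⟨?_, fun x hx => ?_⟩
    · rw [hD, Matrix.IsHermitian, Matrix.conjTranspose_smul]; simp
    · have hx2 : (0:ℝ) < star x ⬝ᵥ x := by
        have := dotProduct_star_self_pos_iff.mpr hx
        simpa using this
      rw [hD]
      simp only [Matrix.smul_mulVec, Matrix.one_mulVec, dotProduct_smul, smul_eq_mul]
      have : (0:ℝ) < star x ⬝ᵥ x := hx2
      positivity
  haveI : Invertible D := by
    refine invertibleOfRightInverse _ ((1 + δ) • (1 : Matrix (Fin n) (Fin n) ℝ)) ?_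
    rw [hD, smul_mul_smul_comm, one_mul, inv_mul_cancel₀ hδ1.ne', one_smul]
  have hDinv : D⁻¹ = (1 + δ) • (1 : Matrix (Fin n) (Fin n) ℝ) := by
    apply Matrix.inv_eq_right_inv
    rw [hD, smul_mul_smul_comm, one_mul, inv_mul_cancel₀ hδ1.ne', one_smul]
  have hPH : (Pᵀ)ᴴ = P := by
    ext i j; simp [Matrix.conjTranspose_apply]
  have h1' : (Matrix.fromBlocks Y Pᵀ (Pᵀ)ᴴ D).PosSemidef := by rw [hPH]; exact h1
  have hschur : (Y - Pᵀ * D⁻¹ * (Pᵀ)ᴴ).PosSemidef :=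
    (Matrix.PosDef.fromBlocks₂₂ Y Pᵀ hDpos).mp h1'
  have hschur' : (Y - (1 + δ) • (Pᵀ * P)).PosSemidef := by
    have : Pᵀ * D⁻¹ * (Pᵀ)ᴴ = (1 + δ) • (Pᵀ * P) := by
      rw [hPH, hDinv, Matrix.mul_smul, Matrix.mul_one, Matrix.smul_mul]
    rwa [this] at hschur
  set M : Matrix (Fin n) (Fin n) ℝ := Y - (1 + δ) • (Pᵀ * P) with hM
  have hMneg : (-M).PosSemidef := by
    have : -M = (1 + δ) • (Pᵀ * P) - Y := by rw [hM]; ring_nf; abel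
    rwa [this]
  have hMzero : M = 0 := by
    have hvec : ∀ x : Fin n → ℝ, M *ᵥ x = 0 := by
      intro x
      have h0 : star x ⬝ᵥ M *ᵥ x = 0 := by
        have a1 := (Matrix.posSemidef_iff_dotProduct_mulVec.mp hschur').2 x
        have a2 := (Matrix.posSemidef_iff_dotProduct_mulVec.mp hMneg).2 x
        simp only [Matrix.neg_mulVec, dotProduct_neg] at a2
        have : (0:ℝ) ≤ star x ⬝ᵥ M *ᵥ x := by simpa using a1
        have h2' : star x ⬝ᵥ M *ᵥ x ≤ 0 := by
          simpa using neg_nonneg.mp (by simpa using a2)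
        linarith
      exact (hschur'.dotProduct_mulVec_zero_iff x).mp h0
    ext i j
    have := congrFun (hvec (Pi.single j 1)) i
    simpa [Matrix.mulVec_single] using this
  have hEq : Y = (1 + δ) • (Pᵀ * P) := by
    have := sub_eq_zero.mp hMzero
    exact this
  refine ⟨hEq, fun nrm ε hε => ?_⟩
  rw [hMzero, map_zero]
  exact hε
end
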